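/- In the setting of the jump Markov process (X_{i+1} | X_i = x ∼ (1−p)δ_x + p·f_c with f_c(x) ≥ f_min > 0 on [0,1]), the quantity Ψ₁(b,g) = sup_{x,z} K^g(x,z)/π(z) satisfies Ψ₁(b,g) ≤ (1 − (1−p)^g) + (1−p)^g·2^b / f_min. In particular, if b = b_n = ⌈r log₂log₂ n⌉ and g = g_n = ⌊γ r log₂log₂ n⌋ with γ > −1/log₂(1−p), then Ψ₁(b_n, g_n) → 1 as n → ∞. -/

import Mathlib

open MeasureTheory ProbabilityTheory Classical Filter

/-- `b`-bit quantization `[x]_b = ⌊x·2^b⌋/2^b`. -/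
noncomputable def quant (b : ℕ) (x : ℝ) : ℝ := ⌊x * 2 ^ b⌋ / 2 ^ b

/-- `g`-step iterate of a Markov kernel. -/
noncomputable def iterK (K : Kernel ℝ ℝ) : ℕ → Kernel ℝ ℝ
  | 0 => Kernel.id
  | (g + 1) => (iterK K g).comp K

/-- `Ψ₁(b,g) = sup_{x ∈ [0,1], z ∈ X_b} K^g(x,z)/π(z)`. -/
noncomputable def Psi1 (K : Kernel ℝ ℝ) (π : Measure ℝ) (b g : ℕ) : ℝ :=
  sSup {r : ℝ | ∃ x ∈ Set.Icc (0 : ℝ) 1, ∃ z ∈ quant b '' Set.Icc (0 : ℝ) 1,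
    r = (iterK K g x {y | quant b y = z}).toReal / (π {y | quant b y = z}).toReal}

lemma iterK_apply' (p : ℝ) (hp : 0 < p) (hp1 : p < 1)
    (ν : Measure ℝ) [IsProbabilityMeasure ν]
    (K : Kernel ℝ ℝ)
    (hK : ∀ x : ℝ, K x = ENNReal.ofReal (1 - p) • Measure.dirac x
        + ENNReal.ofReal p • ν)
    (g : ℕ) (x : ℝ) (s : Set ℝ) (hs : MeasurableSet s) :
    iterK K g x s = ENNReal.ofReal ((1 - p) ^ g) * Measure.dirac x s
      + ENNReal.ofReal (1 - (1 - p) ^ g) * ν s := by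
  induction g generalizing x with
  | zero => simp [iterK, Kernel.id_apply]
  | succ g ih =>
    have hq0 : (0:ℝ) ≤ 1 - p := by linarith
    have hqg0 : (0:ℝ) ≤ (1-p)^g := pow_nonneg hq0 g
    have hqg1 : (1-p)^g ≤ 1 := pow_le_one₀ hq0 (by linarith)
    have : iterK K (g+1) x s = ∫⁻ y, iterK K g y s ∂(K x) := by
      simp only [iterK]
      exact Kernel.comp_apply' _ _ _ hs
    rw [this]
    have hint : ∀ y, iterK K g y s
        = ENNReal.ofReal ((1-p)^g) * s.indicator (1 : ℝ → ENNReal) y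
          + ENNReal.ofReal (1 - (1-p)^g) * ν s := by
      intro y
      rw [ih y, Measure.dirac_apply' _ hs]
    rw [lintegral_congr hint]
    rw [lintegral_add_right _ (by exact measurable_const)]
    rw [lintegral_const_mul _ (Measurable.indicator
      (measurable_one : Measurable (1 : ℝ → ENNReal)) hs)]
    rw [lintegral_indicator_one hs, lintegral_const]
    have huniv : K x Set.univ = 1 := by
      rw [hK x]
      simp only [Measure.add_apply, Measure.smul_apply, smul_eq_mul, measure_univ, mul_one]
      rw [← ENNReal.ofReal_add hq0 hp.le]
      norm_num
    rw [huniv, mul_one]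
    have hKxs : K x s = ENNReal.ofReal (1-p) * Measure.dirac x s + ENNReal.ofReal p * ν s := by
      rw [hK x]; simp [Measure.add_apply]
    rw [hKxs, mul_add, ← mul_assoc, ← mul_assoc]
    rw [← ENNReal.ofReal_mul hqg0, ← ENNReal.ofReal_mul hqg0]
    rw [add_assoc, ← add_mul, ← ENNReal.ofReal_add (by positivity) (by linarith)]
    have e1 : (1-p)^g * (1-p) = (1-p)^(g+1) := by ring
    have e2 : (1-p)^g * p + (1 - (1-p)^g) = 1 - (1-p)^(g+1) := by ring
    rw [e1, e2]

lemma quant_preimage (b : ℕ) (x₀ : ℝ) :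
    {y : ℝ | quant b y = quant b x₀}
      = Set.Ico ((⌊x₀ * 2 ^ b⌋ : ℝ) / 2 ^ b) (((⌊x₀ * 2 ^ b⌋ : ℝ) + 1) / 2 ^ b) := by
  have h2 : (0:ℝ) < 2 ^ b := by positivity
  ext y
  simp only [Set.mem_setOf_eq, Set.mem_Ico, quant]
  constructor
  · intro h
    have h' : (⌊y * 2 ^ b⌋ : ℝ) = (⌊x₀ * 2 ^ b⌋ : ℝ) := by
      exact (div_left_inj' (ne_of_gt h2)).mp h
    have hf : ⌊y * 2 ^ b⌋ = ⌊x₀ * 2 ^ b⌋ := by exact_mod_cast h'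
    obtain ⟨h1, h2'⟩ := Int.floor_eq_iff.mp hf
    constructor
    · rw [div_le_iff₀ h2]; exact h1
    · rw [lt_div_iff₀ h2]; exact h2'
  · rintro ⟨h1, h2'⟩
    have hf : ⌊y * 2 ^ b⌋ = ⌊x₀ * 2 ^ b⌋ := by
      rw [Int.floor_eq_iff]
      exact ⟨by rwa [div_le_iff₀ h2] at h1, by rwa [lt_div_iff₀ h2] at h2'⟩
    rw [hf]

lemma stationary_eq (p : ℝ) (hp : 0 < p) (hp1 : p < 1)
    (ν : Measure ℝ) [IsProbabilityMeasure ν]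
    (K : Kernel ℝ ℝ)
    (hK : ∀ x : ℝ, K x = ENNReal.ofReal (1 - p) • Measure.dirac x
        + ENNReal.ofReal p • ν)
    (π : Measure ℝ) [IsProbabilityMeasure π]
    (hstat : π.bind (fun x => K x) = π) : π = ν := by
  have hq0 : (0:ℝ) ≤ 1 - p := by linarith
  ext s hs
  have hb : π.bind (fun x => K x) s = ∫⁻ x, K x s ∂π :=
    Measure.bind_apply hs (K.measurable.aemeasurable)
  have h1 : ∀ x, K x s = ENNReal.ofReal (1-p) * s.indicator (1 : ℝ → ENNReal) x
      + ENNReal.ofReal p * ν s := by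
    intro x
    rw [hK x]
    simp only [Measure.add_apply, Measure.smul_apply, smul_eq_mul]
    rw [Measure.dirac_apply' _ hs]
  rw [hstat] at hb
  rw [lintegral_congr h1, lintegral_add_right _ measurable_const,
    lintegral_const_mul _ (Measurable.indicator (measurable_one : Measurable (1 : ℝ → ENNReal)) hs),
    lintegral_indicator_one hs, lintegral_const, measure_univ, mul_one] at hb
  have hsplit : π s = ENNReal.ofReal (1-p) * π s + ENNReal.ofReal p * π s := by
    rw [← add_mul, ← ENNReal.ofReal_add hq0 hp.le]
    norm_num
  have hcancel : ENNReal.ofReal p * π s = ENNReal.ofReal p * ν s := by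
    have := hb.symm.trans hsplit
    exact (ENNReal.add_right_inj (by
      exact ENNReal.mul_ne_top ENNReal.ofReal_ne_top (measure_ne_top π s))).mp this.symm
  exact (ENNReal.mul_right_inj (by simp [ENNReal.ofReal_eq_zero]; linarith)
    ENNReal.ofReal_ne_top).mp hcancel

/-- If the cell of `x₀` fits in `[0,1]`, the stationary mass is at least `fmin/2^b`. -/
lemma cell_nu_lb (ν : Measure ℝ) (fmin : ℝ) (hfmin : 0 < fmin)
    (hlb : ∀ s : Set ℝ, MeasurableSet s → s ⊆ Set.Icc (0 : ℝ) 1 →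
      ENNReal.ofReal fmin * volume s ≤ ν s)
    (b : ℕ) (x₀ : ℝ) (hx₀ : 0 ≤ x₀)
    (hcase : (⌊x₀ * 2 ^ b⌋ : ℝ) + 1 ≤ 2 ^ b) :
    ENNReal.ofReal (fmin / 2 ^ b) ≤ ν {y | quant b y = quant b x₀} := by
  have h2 : (0:ℝ) < 2 ^ b := by positivity
  have hk0 : (0:ℝ) ≤ (⌊x₀ * 2 ^ b⌋ : ℝ) := by
    have : (0:ℤ) ≤ ⌊x₀ * 2 ^ b⌋ := Int.floor_nonneg.mpr (by positivity)
    exact_mod_cast this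
  rw [quant_preimage]
  have hsub : Set.Ico ((⌊x₀ * 2 ^ b⌋ : ℝ) / 2 ^ b) (((⌊x₀ * 2 ^ b⌋ : ℝ) + 1) / 2 ^ b)
      ⊆ Set.Icc (0:ℝ) 1 := by
    intro y hy
    refine ⟨le_trans (by positivity) hy.1, ?_⟩
    calc y ≤ ((⌊x₀ * 2 ^ b⌋ : ℝ) + 1) / 2 ^ b := hy.2.le
      _ ≤ 1 := by rw [div_le_one h2]; exact hcase
  have := hlb _ measurableSet_Ico hsub
  rwa [Real.volume_Ico, show ((⌊x₀ * 2 ^ b⌋ : ℝ) + 1) / 2 ^ b - (⌊x₀ * 2 ^ b⌋ : ℝ) / 2 ^ b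
      = 1 / 2 ^ b by ring, ← ENNReal.ofReal_mul hfmin.le, mul_one_div] at this

/-- If the cell of `x₀` sticks out above 1, it has zero stationary mass. -/
lemma cell_nu_zero (ν : Measure ℝ) [IsProbabilityMeasure ν] (hν : ν ≪ volume)
    (hν1 : ν (Set.Icc (0 : ℝ) 1) = 1)
    (b : ℕ) (x₀ : ℝ)
    (hcase : ¬ ((⌊x₀ * 2 ^ b⌋ : ℝ) + 1 ≤ 2 ^ b)) :
    ν {y | quant b y = quant b x₀} = 0 := by
  have h2 : (0:ℝ) < 2 ^ b := by positivity
  push_neg at hcase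
  have hk : (2:ℝ) ^ b ≤ (⌊x₀ * 2 ^ b⌋ : ℝ) := by
    have h1 : ((2:ℤ) ^ b : ℝ) < (⌊x₀ * 2 ^ b⌋ : ℝ) + 1 := by push_cast; linarith
    have h2' : (2:ℤ) ^ b < ⌊x₀ * 2 ^ b⌋ + 1 := by exact_mod_cast h1
    have : (2:ℤ) ^ b ≤ ⌊x₀ * 2 ^ b⌋ := by omega
    exact_mod_cast this
  have hcompl : ν (Set.Icc (0:ℝ) 1)ᶜ = 0 := by
    rw [measure_compl measurableSet_Icc (measure_ne_top ν _), hν1, measure_univ,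
      tsub_self]
  have hone : ν {(1:ℝ)} = 0 := hν (Real.volume_singleton)
  have hsub : {y : ℝ | quant b y = quant b x₀} ⊆ {(1:ℝ)} ∪ (Set.Icc (0:ℝ) 1)ᶜ := by
    rw [quant_preimage]
    intro y hy
    have hy1 : (1:ℝ) ≤ y := by
      have := hy.1
      have h1le : (1:ℝ) ≤ (⌊x₀ * 2 ^ b⌋ : ℝ) / 2 ^ b := by
        rw [le_div_iff₀ h2]; linarith
      linarith
    rcases eq_or_lt_of_le hy1 with h | h
    · exact Or.inl (by simp [← h])
    · exact Or.inr (by simp [Set.mem_Icc]; intro _; linarith)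
  refine le_antisymm ?_ zero_le
  calc ν {y : ℝ | quant b y = quant b x₀} ≤ ν ({(1:ℝ)} ∪ (Set.Icc (0:ℝ) 1)ᶜ) :=
        measure_mono hsub
    _ ≤ ν {(1:ℝ)} + ν (Set.Icc (0:ℝ) 1)ᶜ := measure_union_le _ _
    _ = 0 := by rw [hone, hcompl, add_zero]

/-- For the jump Markov chain with jump density bounded below by `f_min`,
`Ψ₁(b,g) ≤ (1−(1−p)^g) + (1−p)^g 2^b / f_min`; in particular with
`b_n = ⌈r log₂ log₂ n⌉`, `g_n = ⌊γ r log₂ log₂ n⌋`, `γ > −1/log₂(1−p)`,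
`Ψ₁(b_n, g_n) → 1`. -/
theorem jump_markov_Psi1_bound_and_limit
    (p : ℝ) (hp : 0 < p) (hp1 : p < 1)
    (ν : Measure ℝ) [IsProbabilityMeasure ν] (hν : ν ≪ volume)
    (hν1 : ν (Set.Icc (0 : ℝ) 1) = 1)
    (fmin : ℝ) (hfmin : 0 < fmin)
    (hlb : ∀ s : Set ℝ, MeasurableSet s → s ⊆ Set.Icc (0 : ℝ) 1 →
      ENNReal.ofReal fmin * volume s ≤ ν s)
    (K : Kernel ℝ ℝ)
    (hK : ∀ x : ℝ, K x = ENNReal.ofReal (1 - p) • Measure.dirac x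
        + ENNReal.ofReal p • ν)
    (π : Measure ℝ) [IsProbabilityMeasure π] (hπ1 : π (Set.Icc (0 : ℝ) 1) = 1)
    (hstat : π.bind (fun x => K x) = π) :
    (∀ b g : ℕ, Psi1 K π b g
        ≤ (1 - (1 - p) ^ g) + (1 - p) ^ g * 2 ^ b / fmin)
    ∧ ∀ (r γ : ℝ), 1 ≤ r → γ > -1 / Real.logb 2 (1 - p) →
        Tendsto (fun n : ℕ =>
            Psi1 K π ⌈r * Real.logb 2 (Real.logb 2 n)⌉₊
              ⌊γ * (r * Real.logb 2 (Real.logb 2 n))⌋₊)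
          atTop (nhds 1) := by
  have hq0 : (0:ℝ) ≤ 1 - p := by linarith
  have hq1 : (1:ℝ) - p < 1 := by linarith
  have hπν : π = ν := stationary_eq p hp hp1 ν K hK π hstat
  -- nonnegativity of the bound
  have hbound0 : ∀ b g : ℕ, 0 ≤ (1 - (1 - p) ^ g) + (1 - p) ^ g * 2 ^ b / fmin := by
    intro b g
    have h1 : (1-p)^g ≤ 1 := pow_le_one₀ hq0 hq1.le
    have h2 : (0:ℝ) ≤ (1-p)^g * 2^b / fmin := by positivity
    linarith
  -- every element of the Psi1 set is bounded
  have key : ∀ b g : ℕ, ∀ rr ∈ {r : ℝ | ∃ x ∈ Set.Icc (0 : ℝ) 1,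
      ∃ z ∈ quant b '' Set.Icc (0 : ℝ) 1,
      r = (iterK K g x {y | quant b y = z}).toReal / (π {y | quant b y = z}).toReal},
      rr ≤ (1 - (1 - p) ^ g) + (1 - p) ^ g * 2 ^ b / fmin := by
    intro b g rr hrr
    obtain ⟨x, hx, z, ⟨x₀, hx₀, rfl⟩, rfl⟩ := hrr
    have h2b : (0:ℝ) < 2 ^ b := by positivity
    have hqg0 : (0:ℝ) ≤ (1-p)^g := pow_nonneg hq0 g
    have hqg1 : (1-p)^g ≤ 1 := pow_le_one₀ hq0 hq1.le
    set S := {y : ℝ | quant b y = quant b x₀} with hSdef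
    have hmeas : MeasurableSet S := by
      rw [hSdef, quant_preimage]; exact measurableSet_Ico
    have hnum : (iterK K g x S).toReal
        = (1-p)^g * (Measure.dirac x S).toReal + (1 - (1-p)^g) * (ν S).toReal := by
      rw [iterK_apply' p hp hp1 ν K hK g x S hmeas, ENNReal.toReal_add
        (ENNReal.mul_ne_top ENNReal.ofReal_ne_top (measure_ne_top _ _))
        (ENNReal.mul_ne_top ENNReal.ofReal_ne_top (measure_ne_top _ _)),
        ENNReal.toReal_mul, ENNReal.toReal_mul, ENNReal.toReal_ofReal hqg0,
        ENNReal.toReal_ofReal (by linarith)]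
    have hd1 : (Measure.dirac x S).toReal ≤ 1 := by
      have := prob_le_one (μ := Measure.dirac x) (s := S)
      calc (Measure.dirac x S).toReal ≤ (1 : ENNReal).toReal :=
            ENNReal.toReal_mono (by simp) this
        _ = 1 := by simp
    have hd0 : 0 ≤ (Measure.dirac x S).toReal := ENNReal.toReal_nonneg
    rw [hπν]
    by_cases hcase : (⌊x₀ * 2 ^ b⌋ : ℝ) + 1 ≤ 2 ^ b
    · -- cell inside [0,1]
      have hνlb := cell_nu_lb ν fmin hfmin hlb b x₀ hx₀.1 hcase
      have hns : fmin / 2 ^ b ≤ (ν S).toReal := by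
        have := ENNReal.toReal_mono (measure_ne_top ν S) hνlb
        rwa [ENNReal.toReal_ofReal (by positivity)] at this
      have hnspos : 0 < (ν S).toReal := lt_of_lt_of_le (by positivity) hns
      rw [hnum, add_div, mul_div_assoc, mul_div_assoc, div_self (ne_of_gt hnspos), mul_one]
      have hstep : (1-p)^g * ((Measure.dirac x S).toReal / (ν S).toReal)
          ≤ (1-p)^g * 2 ^ b / fmin := by
        rw [← mul_div_assoc]
        calc (1-p)^g * (Measure.dirac x S).toReal / (ν S).toReal
            ≤ (1-p)^g / (fmin / 2 ^ b) :=
              div_le_div₀ hqg0 (mul_le_of_le_one_right hqg0 hd1) (by positivity) hns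
          _ = (1-p)^g * 2 ^ b / fmin := div_div_eq_mul_div _ _ _
      linarith
    · -- cell sticks out: ν S = 0
      have : ν S = 0 := cell_nu_zero ν hν hν1 b x₀ hcase
      rw [this]
      simp only [ENNReal.toReal_zero, div_zero]
      exact hbound0 b g
  have part1 : ∀ b g : ℕ, Psi1 K π b g
      ≤ (1 - (1 - p) ^ g) + (1 - p) ^ g * 2 ^ b / fmin := by
    intro b g
    exact Real.sSup_le (key b g) (hbound0 b g)
  refine ⟨part1, ?_⟩
  -- lower bound on Psi1
  have lower : ∀ b g : ℕ, 1 - (1-p)^g ≤ Psi1 K π b g := by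
    intro b g
    have h2b : (0:ℝ) < 2 ^ b := by positivity
    have hqg0 : (0:ℝ) ≤ (1-p)^g := pow_nonneg hq0 g
    set S := {y : ℝ | quant b y = quant b (0:ℝ)} with hSdef
    have hmeas : MeasurableSet S := by
      rw [hSdef, quant_preimage]; exact measurableSet_Ico
    have hcase : (⌊(0:ℝ) * 2 ^ b⌋ : ℝ) + 1 ≤ 2 ^ b := by
      simp only [zero_mul, Int.floor_zero, Int.cast_zero, zero_add]
      exact one_le_pow₀ (by norm_num)
    have hνlb := cell_nu_lb ν fmin hfmin hlb b 0 le_rfl hcase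
    have hns : fmin / 2 ^ b ≤ (ν S).toReal := by
      have := ENNReal.toReal_mono (measure_ne_top ν S) hνlb
      rwa [ENNReal.toReal_ofReal (by positivity)] at this
    have hnspos : 0 < (ν S).toReal := lt_of_lt_of_le (by positivity) hns
    have hdir : Measure.dirac (0:ℝ) S = 1 := by
      rw [Measure.dirac_apply' _ hmeas, Set.indicator_of_mem]
      · rfl
      · exact rfl
    have hnum : (iterK K g 0 S).toReal
        = (1-p)^g + (1 - (1-p)^g) * (ν S).toReal := by
      rw [iterK_apply' p hp hp1 ν K hK g 0 S hmeas, hdir, mul_one, ENNReal.toReal_add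
        ENNReal.ofReal_ne_top
        (ENNReal.mul_ne_top ENNReal.ofReal_ne_top (measure_ne_top _ _)),
        ENNReal.toReal_mul, ENNReal.toReal_ofReal hqg0,
        ENNReal.toReal_ofReal (by
          have : (1-p)^g ≤ 1 := pow_le_one₀ hq0 hq1.le
          linarith)]
    have hmem : (iterK K g 0 S).toReal / (π S).toReal ∈
        {r : ℝ | ∃ x ∈ Set.Icc (0 : ℝ) 1, ∃ z ∈ quant b '' Set.Icc (0 : ℝ) 1,
          r = (iterK K g x {y | quant b y = z}).toReal / (π {y | quant b y = z}).toReal} :=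
      ⟨0, ⟨le_rfl, zero_le_one⟩, quant b 0, ⟨0, ⟨le_rfl, zero_le_one⟩, rfl⟩, rfl⟩
    have hle : 1 - (1-p)^g ≤ (iterK K g 0 S).toReal / (π S).toReal := by
      rw [hπν, hnum, le_div_iff₀ hnspos]
      nlinarith
    exact le_trans hle (le_csSup ⟨_, key b g⟩ hmem)
  -- Part 2: the limit
  intro r γ hr hγ
  have hqpos : (0:ℝ) < 1 - p := by linarith
  have hlq : Real.log (1-p) < 0 := Real.log_neg hqpos hq1
  have hl2 : (0:ℝ) < Real.log 2 := Real.log_pos (by norm_num)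
  have hγ' : -Real.log 2 / Real.log (1-p) < γ := by
    have : -1 / Real.logb 2 (1-p) = -Real.log 2 / Real.log (1-p) := by
      rw [Real.logb, div_div_eq_mul_div]
      ring
    rw [← this]
    exact hγ
  have hγpos : 0 < γ := lt_trans (div_pos_of_neg_of_neg (by linarith) hlq) hγ'
  have hc : γ * Real.log (1-p) + Real.log 2 < 0 := by
    have := (div_lt_iff_of_neg hlq).mp hγ'
    linarith
  set A : ℕ → ℝ := fun n => r * Real.logb 2 (Real.logb 2 n) with hAdef
  have hA : Tendsto A atTop atTop := by
    have h1 : Tendsto (fun n : ℕ => Real.logb 2 (n:ℝ)) atTop atTop :=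
      (Real.tendsto_logb_atTop one_lt_two).comp tendsto_natCast_atTop_atTop
    have h2 : Tendsto (fun n : ℕ => Real.logb 2 (Real.logb 2 (n:ℝ))) atTop atTop :=
      (Real.tendsto_logb_atTop one_lt_two).comp h1
    exact Tendsto.const_mul_atTop (by linarith) h2
  set gn : ℕ → ℕ := fun n => ⌊γ * A n⌋₊ with hgndef
  set bn : ℕ → ℕ := fun n => ⌈A n⌉₊ with hbndef
  have hgn : Tendsto gn atTop atTop :=
    tendsto_nat_floor_atTop.comp (Tendsto.const_mul_atTop hγpos hA)
  have hqg : Tendsto (fun n => (1-p) ^ gn n) atTop (nhds 0) :=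
    (tendsto_pow_atTop_nhds_zero_of_lt_one hq0 hq1).comp hgn
  -- the error term q^gn * 2^bn / fmin tends to 0
  have hF : Tendsto (fun n => A n * (γ * Real.log (1-p) + Real.log 2)
      + (Real.log 2 - Real.log (1-p))) atTop atBot :=
    tendsto_atBot_add_const_right _ _ (Tendsto.atTop_mul_const_of_neg hc hA)
  have hexpF : Tendsto (fun n => Real.exp (A n * (γ * Real.log (1-p) + Real.log 2)
      + (Real.log 2 - Real.log (1-p))) / fmin) atTop (nhds 0) := by
    have := (Real.tendsto_exp_atBot.comp hF).div_const fmin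
    simpa using this
  have hT : Tendsto (fun n => (1-p) ^ gn n * 2 ^ bn n / fmin) atTop (nhds 0) := by
    apply tendsto_of_tendsto_of_tendsto_of_le_of_le' tendsto_const_nhds hexpF
    · exact Eventually.of_forall fun n => by positivity
    · filter_upwards [hA.eventually_ge_atTop 0] with n hAn
      have hfloor : γ * A n - 1 < (gn n : ℝ) := Nat.sub_one_lt_floor _
      have hceil : (bn n : ℝ) ≤ A n + 1 := (Nat.ceil_lt_add_one hAn).le
      have e1 : ((1:ℝ)-p) ^ gn n = Real.exp ((gn n : ℝ) * Real.log (1-p)) := by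
        rw [Real.exp_nat_mul, Real.exp_log hqpos]
      have e2 : ((2:ℝ)) ^ bn n = Real.exp ((bn n : ℝ) * Real.log 2) := by
        rw [Real.exp_nat_mul, Real.exp_log (by norm_num)]
      rw [e1, e2, ← Real.exp_add]
      apply div_le_div_of_nonneg_right ?_ hfmin.le
      apply Real.exp_le_exp.mpr
      have t1 : (gn n : ℝ) * Real.log (1-p) ≤ (γ * A n - 1) * Real.log (1-p) :=
        mul_le_mul_of_nonpos_right hfloor.le hlq.le
      have t2 : (bn n : ℝ) * Real.log 2 ≤ (A n + 1) * Real.log 2 :=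
        mul_le_mul_of_nonneg_right hceil hl2.le
      calc (gn n : ℝ) * Real.log (1-p) + (bn n : ℝ) * Real.log 2
          ≤ (γ * A n - 1) * Real.log (1-p) + (A n + 1) * Real.log 2 := by linarith
        _ = A n * (γ * Real.log (1-p) + Real.log 2) + (Real.log 2 - Real.log (1-p)) := by ring
  -- squeeze Psi1 between 1 - q^gn and 1 - q^gn + T n
  have hlow : Tendsto (fun n => 1 - (1-p) ^ gn n) atTop (nhds 1) := by
    have h := hqg.const_sub (1:ℝ)
    simpa using h
  have hhigh : Tendsto (fun n => (1 - (1-p) ^ gn n) + (1-p) ^ gn n * 2 ^ bn n / fmin)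
      atTop (nhds 1) := by
    have := hlow.add hT
    simpa using this
  apply tendsto_of_tendsto_of_tendsto_of_le_of_le' hlow hhigh
  · exact Eventually.of_forall fun n => lower (bn n) (gn n)
  · exact Eventually.of_forall fun n => part1 (bn n) (gn n)
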